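/- For every n ≥ 1 and every ε > 0, there exists a constant c > 0 (depending only on ε) such that the star chromatic index of the complete graph K_n is at most c · n^{1+ε}. -/

import Mathlib

open SimpleGraph

/-- A star edge-coloring: proper (adjacent distinct edges get different colors),
and no path with 4 edges nor 4-cycle uses at most two colors. -/
def IsStarEdgeColoring {V α : Type*} (G : SimpleGraph V) (c : Sym2 V → α) : Prop :=
  (∀ e₁ ∈ G.edgeSet, ∀ e₂ ∈ G.edgeSet, e₁ ≠ e₂ → (∃ v, v ∈ e₁ ∧ v ∈ e₂) → c e₁ ≠ c e₂) ∧
  (∀ (u v : V) (p : G.Walk u v), p.IsPath → p.length = 4 →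
      ¬ ∃ a b : α, ∀ e ∈ p.edges, c e = a ∨ c e = b) ∧
  (∀ (u : V) (p : G.Walk u u), p.IsCycle → p.length = 4 →
      ¬ ∃ a b : α, ∀ e ∈ p.edges, c e = a ∨ c e = b)

/-- The star chromatic index. -/
noncomputable def starChromaticIndex {V : Type*} (G : SimpleGraph V) : ℕ :=
  sInf {k | ∃ c : Sym2 V → Fin k, IsStarEdgeColoring G c}

lemma StarAux.walk_len4 {V : Type*} {G : SimpleGraph V} {u v : V} (p : G.Walk u v)
    (h : p.length = 4) :
    ∃ v1 v2 v3, p.support = [u, v1, v2, v3, v] ∧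
      p.edges = [s(u,v1), s(v1,v2), s(v2,v3), s(v3,v)] := by
  cases p with
  | nil => simp at h
  | cons h1 p =>
    cases p with
    | nil => simp at h
    | cons h2 p =>
      cases p with
      | nil => simp at h
      | cons h3 p =>
        cases p with
        | nil => simp at h
        | cons h4 p =>
          cases p with
          | nil => exact ⟨_, _, _, rfl, rfl⟩
          | cons h5 p => simp [SimpleGraph.Walk.length_cons] at h

lemma StarAux.alt4 {α : Type*} {x1 x2 x3 x4 a b : α}
    (h1 : x1 = a ∨ x1 = b) (h2 : x2 = a ∨ x2 = b) (h3 : x3 = a ∨ x3 = b) (h4 : x4 = a ∨ x4 = b)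
    (d12 : x1 ≠ x2) (d23 : x2 ≠ x3) (d34 : x3 ≠ x4) : x1 = x3 ∧ x2 = x4 := by
  rcases h1 with rfl | rfl <;> rcases h2 with rfl | rfl <;> rcases h3 with h3 | h3 <;>
    rcases h4 with h4 | h4 <;> simp_all

/-- The sum coloring `{u,v} ↦ f u + f v` with values of `f` in a 3-AP-free set is a
star edge coloring of the complete graph. -/
lemma StarAux.star_of_apfree {n N : ℕ} {A : Finset ℕ} (hA : ThreeAPFree (A : Set ℕ))
    (hAN : ∀ a ∈ A, a < N) (f : Fin n → ℕ) (hf : Function.Injective f)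
    (hfA : ∀ v, f v ∈ A) :
    ∃ c : Sym2 (Fin n) → Fin (2 * N), IsStarEdgeColoring (⊤ : SimpleGraph (Fin n)) c := by
  have hb : ∀ u v : Fin n, f u + f v < 2 * N := fun u v => by
    have := hAN _ (hfA u); have := hAN _ (hfA v); omega
  refine ⟨Sym2.lift ⟨fun u v => (⟨f u + f v, hb u v⟩ : Fin (2 * N)),
    fun u v => by simp [Nat.add_comm]⟩, ?_, ?_, ?_⟩
  case' refine_1 =>
    intro e1 he1 e2 he2
    revert he1 he2
    induction e1 using Sym2.ind with | _ a b => ?_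
    induction e2 using Sym2.ind with | _ x y => ?_
    intro he1 he2 hne hex heq
    simp only [Sym2.lift_mk, Fin.mk.injEq] at heq
    obtain ⟨w, hw1, hw2⟩ := hex
    rw [Sym2.mem_iff] at hw1 hw2
    apply hne
    rw [Sym2.eq_iff]
    rcases hw1 with rfl | rfl <;> rcases hw2 with rfl | rfl
    · exact Or.inl ⟨rfl, hf (by omega)⟩
    · exact Or.inr ⟨rfl, hf (by omega)⟩
    · exact Or.inr ⟨hf (by omega), rfl⟩
    · exact Or.inl ⟨hf (by omega), rfl⟩
  case' refine_2 =>
    intro u v p hp hlen hex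
    obtain ⟨v1, v2, v3, hsup, hedg⟩ := StarAux.walk_len4 p hlen
    obtain ⟨a, b, hab⟩ := hex
    rw [hedg] at hab
    have h1 := hab s(u,v1) (by simp)
    have h2 := hab s(v1,v2) (by simp)
    have h3 := hab s(v2,v3) (by simp)
    have h4 := hab s(v3,v) (by simp)
    have nd := hp.support_nodup
    rw [hsup] at nd
    simp only [List.nodup_cons, List.mem_cons, List.mem_singleton, List.not_mem_nil,
      or_false, not_or] at nd
    obtain ⟨⟨hu1, hu2, hu3, huv⟩, ⟨h12, h13, h1v⟩, ⟨h23, h2v⟩, h3v, -⟩ := nd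
    have key := StarAux.alt4 h1 h2 h3 h4
      (by intro h; simp only [Sym2.lift_mk, Fin.mk.injEq] at h
          exact hu2 (hf (by omega)))
      (by intro h; simp only [Sym2.lift_mk, Fin.mk.injEq] at h
          exact h13 (hf (by omega)))
      (by intro h; simp only [Sym2.lift_mk, Fin.mk.injEq] at h
          exact h2v (hf (by omega)))
    obtain ⟨k1, k2⟩ := key
    simp only [Sym2.lift_mk, Fin.mk.injEq] at k1 k2
    exact hu2 (hf (hA (hfA u) (hfA v2) (hfA v) (by omega)))
  case' refine_3 =>
    intro u p hp hlen hex
    obtain ⟨v1, v2, v3, hsup, hedg⟩ := StarAux.walk_len4 p hlen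
    obtain ⟨a, b, hab⟩ := hex
    rw [hedg] at hab
    have h1 := hab s(u,v1) (by simp)
    have h2 := hab s(v1,v2) (by simp)
    have h3 := hab s(v2,v3) (by simp)
    have h4 := hab s(v3,u) (by simp)
    have nd := hp.support_nodup
    rw [hsup] at nd
    simp only [List.tail_cons, List.nodup_cons, List.mem_cons, List.mem_singleton,
      List.not_mem_nil, or_false, not_or] at nd
    obtain ⟨⟨h12, h13, h1u⟩, ⟨h23, h2u⟩, h3u, -⟩ := nd
    have key := StarAux.alt4 h1 h2 h3 h4
      (by intro h; simp only [Sym2.lift_mk, Fin.mk.injEq] at h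
          exact h2u (hf (by omega)).symm)
      (by intro h; simp only [Sym2.lift_mk, Fin.mk.injEq] at h
          exact h13 (hf (by omega)))
      (by intro h; simp only [Sym2.lift_mk, Fin.mk.injEq] at h
          exact h2u (hf (by omega)))
    obtain ⟨k1, k2⟩ := key
    simp only [Sym2.lift_mk, Fin.mk.injEq] at k1 k2
    exact h13 (hf (by omega))

/-- for every ε > 0 there is c > 0 such that for all n ≥ 1,
χ'_s(K_n) ≤ c · n^(1+ε). -/
theorem starChromaticIndex_completeGraph_le_rpow :
    ∀ ε : ℝ, 0 < ε → ∃ c : ℝ, 0 < c ∧ ∀ n : ℕ, 1 ≤ n →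
      (starChromaticIndex (⊤ : SimpleGraph (Fin n)) : ℝ) ≤ c * (n : ℝ) ^ ((1 : ℝ) + ε) := by
  intro ε hε
  set δ : ℝ := ε / (1 + ε) with hδdef
  have hδ0 : 0 < δ := div_pos hε (by linarith)
  have hδ1 : δ < 1 := by rw [hδdef, div_lt_one (by linarith)]; linarith
  set B : ℝ := Real.exp (4 / (δ * (1 - δ))) with hBdef
  have hδδ : 0 < δ * (1 - δ) := by nlinarith
  have hB1 : 1 ≤ B := Real.one_le_exp (div_nonneg (by norm_num) hδδ.le)
  refine ⟨2 * (B + 4097), by positivity, ?_⟩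
  intro n hn
  have hn1 : (1:ℝ) ≤ (n:ℝ) := by exact_mod_cast hn
  set x : ℝ := (n : ℝ) ^ ((1:ℝ) + ε) with hxdef
  have hx1 : 1 ≤ x := Real.one_le_rpow hn1 (by linarith)
  have hx0 : 0 ≤ B * x := by positivity
  set N : ℕ := 4096 + ⌈B * x⌉₊ with hNdef
  have hN4096 : 4096 ≤ N := Nat.le_add_right _ _
  have hNR : B * x ≤ (N : ℝ) := by
    have h1 := Nat.le_ceil (B * x)
    have h2 : (⌈B*x⌉₊ : ℝ) ≤ (N:ℝ) := by exact_mod_cast Nat.le_add_left _ _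
    linarith
  have hN0 : (0:ℝ) < N := lt_of_lt_of_le (by positivity) hNR
  have hroth := Behrend.roth_lower_bound_explicit (N := N) hN4096
  obtain ⟨A, hAsub, hAcard, hAfree⟩ := rothNumberNat_spec N
  have hL0 : 0 ≤ Real.log N :=
    Real.log_nonneg (by exact_mod_cast Nat.one_le_iff_ne_zero.2 (by omega))
  set s : ℝ := Real.sqrt (Real.log N) with hsdef
  have hs : s ^ 2 = Real.log N := Real.sq_sqrt hL0
  have hs0 : 0 ≤ s := Real.sqrt_nonneg _
  have hexp : Real.exp (-(4/δ)) * (N:ℝ) ^ (-δ) ≤ Real.exp (-4 * s) := by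
    rw [Real.rpow_def_of_pos hN0, ← Real.exp_add]
    apply Real.exp_le_exp.2
    have hδne : δ ≠ 0 := ne_of_gt hδ0
    have h6 : (0:ℝ) ≤ 4 + δ^2*s^2 - 4*s*δ := by nlinarith [sq_nonneg (δ * s - 2)]
    have h7 := div_nonneg h6 hδ0.le
    have heq : (4 + δ^2*s^2 - 4*s*δ)/δ = 4/δ + δ*s^2 - 4*s := by field_simp
    rw [heq] at h7
    nlinarith [hs]
  have hcard : n ≤ A.card := by
    have e1 : Real.exp (-(4/δ)) * B ^ ((1:ℝ) - δ) = 1 := by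
      have hδne : δ ≠ 0 := ne_of_gt hδ0
      have h1δ : (1:ℝ) - δ ≠ 0 := by linarith
      have hm : 4 / (δ * (1 - δ)) * (1 - δ) = 4 / δ := by field_simp
      rw [hBdef, ← Real.exp_mul, hm, ← Real.exp_add]
      simp
    have e2 : x ^ ((1:ℝ) - δ) = (n:ℝ) := by
      show ((n:ℝ) ^ ((1:ℝ) + ε)) ^ ((1:ℝ) - δ) = (n:ℝ)
      rw [← Real.rpow_mul (le_trans zero_le_one hn1)]
      have hm : ((1:ℝ) + ε) * (1 - δ) = 1 := by
        rw [hδdef]; field_simp; ring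
      rw [hm, Real.rpow_one]
    have e3 : (n:ℝ) ≤ Real.exp (-(4/δ)) * (N:ℝ) ^ ((1:ℝ) - δ) := by
      have hmon : (B * x) ^ ((1:ℝ)-δ) ≤ (N:ℝ) ^ ((1:ℝ)-δ) :=
        Real.rpow_le_rpow hx0 hNR (by linarith)
      have hmul : (B * x) ^ ((1:ℝ)-δ) = B ^ ((1:ℝ)-δ) * x ^ ((1:ℝ)-δ) :=
        Real.mul_rpow (by positivity) (by positivity)
      have hkey : Real.exp (-(4/δ)) * (B*x) ^ ((1:ℝ)-δ) = (n:ℝ) := by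
        rw [hmul, ← mul_assoc, e1, one_mul, e2]
      rw [← hkey]
      exact mul_le_mul_of_nonneg_left hmon (Real.exp_pos _).le
    have e4 : Real.exp (-(4/δ)) * (N:ℝ) ^ ((1:ℝ)-δ) ≤ (N:ℝ) * Real.exp (-4*s) := by
      have hsplit : (N:ℝ) ^ ((1:ℝ)-δ) = (N:ℝ) * (N:ℝ) ^ (-δ) := by
        rw [show (1:ℝ) - δ = 1 + -δ by ring, Real.rpow_add hN0, Real.rpow_one]
      rw [hsplit]
      calc Real.exp (-(4/δ)) * ((N:ℝ) * (N:ℝ) ^ (-δ))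
          = (N:ℝ) * (Real.exp (-(4/δ)) * (N:ℝ) ^ (-δ)) := by ring
        _ ≤ (N:ℝ) * Real.exp (-4*s) := mul_le_mul_of_nonneg_left hexp hN0.le
    have hfin : (n:ℝ) ≤ (A.card : ℝ) := by
      rw [hAcard]
      linarith [hroth.le]
    exact_mod_cast hfin
  have hAN : ∀ a ∈ A, a < N := fun a ha => Finset.mem_range.1 (hAsub ha)
  obtain ⟨col, hcol⟩ := StarAux.star_of_apfree hAfree hAN
    (fun v => A.orderEmbOfCardLe hcard v)
    (fun a b h => (A.orderEmbOfCardLe hcard).injective h)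
    (fun v => A.orderEmbOfCardLe_mem hcard v)
  have hchi : starChromaticIndex (⊤ : SimpleGraph (Fin n)) ≤ 2 * N :=
    Nat.sInf_le ⟨col, hcol⟩
  have h2 : (starChromaticIndex (⊤ : SimpleGraph (Fin n)) : ℝ) ≤ 2 * (N:ℝ) := by
    exact_mod_cast hchi
  have hceil : (⌈B*x⌉₊ : ℝ) < B * x + 1 := Nat.ceil_lt_add_one hx0
  have hNle : (N:ℝ) ≤ B*x + 4097 := by
    have : (N:ℝ) = 4096 + (⌈B*x⌉₊ : ℝ) := by rw [hNdef]; push_cast; ring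
    linarith
  have hfinal : 2 * (N:ℝ) ≤ 2 * (B + 4097) * x := by nlinarith
  linarith
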